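/- (Reduction of the second-variation condition to a condition on h(x).) At the trivial representation p(z|x) = p(z), there exists a perturbation h(z|x) with ∫ h(z|x) dz = 0 such that δ²IB_β[p(z|x)] < 0 if and only if there exists a function h(x) such that G[h(x)] < 0, where G[h(x)] = ∫ dx h(x)² p(x) − β ∫ (dy/p(y)) (∫ dx h(x) p(x) p(y|x))² + (β−1)(∫ dx h(x) p(x))². Moreover, given such an h(x), the product perturbation h(z|x) = h(x)·h₂(z), for any h₂(z) with ∫ h₂(z) dz = 0 and ∫ h₂(z)²/p(z) dz > 0, achieves δ²IB_β[p(z|x)] < 0 at the trivial representation. -/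
import Mathlib


open Filter Asymptotics
open scoped BigOperators Topology

/-- A joint probability distribution `p(x,y)` on finite types `X` and `Y`. -/
structure JointDist (X Y : Type) [Fintype X] [Fintype Y] where
  p : X → Y → ℝ
  nonneg : ∀ x y, 0 ≤ p x y
  sum_one : ∑ x, ∑ y, p x y = 1

variable {X Y Z : Type} [Fintype X] [Fintype Y] [Fintype Z]

/-- The marginal distribution `p(x)` of `X`. -/
def JointDist.pX (P : JointDist X Y) (x : X) : ℝ := ∑ y, P.p x y

/-- The marginal distribution `p(y)` of `Y`. -/
def JointDist.pY (P : JointDist X Y) (y : Y) : ℝ := ∑ x, P.p x y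

/-- An encoder: a conditional distribution `p(z|x)` specifying a representation `Z` of `X`;
together with `p(x,y)` it determines the Markov chain `Z ← X ↔ Y`. -/
structure Encoder (X Z : Type) [Fintype X] [Fintype Z] where
  c : X → Z → ℝ
  nonneg : ∀ x z, 0 ≤ c x z
  sum_one : ∀ x, ∑ z, c x z = 1

/-- The mutual information `I(X;Z)` of the representation given by encoder `e`,
where `p(x,z) = p(x) p(z|x)` and `p(z) = ∑ x, p(x) p(z|x)`. -/
noncomputable def IXZ (P : JointDist X Y) (e : Encoder X Z) : ℝ :=
  ∑ x, ∑ z, P.pX x * e.c x z *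
    Real.log (P.pX x * e.c x z / (P.pX x * ∑ x', P.pX x' * e.c x' z))

/-- The mutual information `I(Y;Z)`, using the Markov chain `Z ← X ↔ Y`,
i.e. `p(y,z) = ∑ x, p(x,y) p(z|x)`. -/
noncomputable def IYZ (P : JointDist X Y) (e : Encoder X Z) : ℝ :=
  ∑ y, ∑ z, (∑ x, P.p x y * e.c x z) *
    Real.log ((∑ x, P.p x y * e.c x z) / (P.pY y * ∑ x, P.pX x * e.c x z))

/-- The Information Bottleneck objective `IB_β(X,Y;Z) = I(X;Z) − β·I(Y;Z)`. -/
noncomputable def IB (P : JointDist X Y) (β : ℝ) (e : Encoder X Z) : ℝ :=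
  IXZ P e - β * IYZ P e

/-- `(X,Y)` is `IB_β`-learnable if some representation `Z` (given by some encoder `p₁(z|x)`)
achieves `IB_β(X,Y;Z) < 0`, where `0` is the value attained by the trivial representation
`p(z|x) = p(z)`. -/
def IBLearnable (P : JointDist X Y) (β : ℝ) : Prop :=
  ∃ (n : ℕ) (e : Encoder X (Fin n)), IB P β e < 0

/-- The second-order variation `δ²IB_β[p(z|x)]` of the IB objective, evaluated at the trivial
representation `p(z|x) = q(z)` (where `p(x,z) = p(x)q(z)` and `p(y,z) = p(y)q(z)`), for a
perturbation `h(z|x)`: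
`δ²IB_β = (1/2)[ ∑ p(x)/q(z) h(z|x)² − β ∑ p(x,y)p(x',y)/(p(y)q(z)) h(z|x)h(z|x')`
`+ (β−1) ∑ p(x)p(x')/q(z) h(z|x)h(z|x') ]`. -/
noncomputable def delta2IBtrivial (P : JointDist X Y) (β : ℝ) (q : Z → ℝ)
    (h : X → Z → ℝ) : ℝ :=
  (1 / 2) * ((∑ x, ∑ z, P.pX x / q z * (h x z) ^ 2)
    - β * (∑ x, ∑ x', ∑ y, ∑ z,
        P.p x y * P.p x' y / (P.pY y * q z) * (h x z * h x' z))
    + (β - 1) * (∑ x, ∑ x', ∑ z, P.pX x * P.pX x' / q z * (h x z * h x' z)))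

/-- The functional `G[h(x)] = ∑ h(x)² p(x) − β ∑_y (1/p(y)) (∑_x h(x) p(x) p(y|x))²`
`+ (β−1)(∑_x h(x) p(x))²` (note `p(x)p(y|x) = p(x,y)`). -/
noncomputable def Gfunc (P : JointDist X Y) (β : ℝ) (h : X → ℝ) : ℝ :=
  (∑ x, (h x) ^ 2 * P.pX x)
    - β * (∑ y, (1 / P.pY y) * (∑ x, h x * P.p x y) ^ 2)
    + (β - 1) * (∑ x, h x * P.pX x) ^ 2

private lemma sum_comm3_aux {A B C : Type*} [Fintype A] [Fintype B] [Fintype C]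
    (f : A → B → C → ℝ) :
    ∑ a, ∑ b, ∑ c, f a b c = ∑ c, ∑ a, ∑ b, f a b c :=
  calc ∑ a, ∑ b, ∑ c, f a b c
      = ∑ a, ∑ c, ∑ b, f a b c :=
        Finset.sum_congr rfl fun a _ => Finset.sum_comm
    _ = ∑ c, ∑ a, ∑ b, f a b c := Finset.sum_comm

private lemma sum_comm4_aux {A B C D : Type*} [Fintype A] [Fintype B] [Fintype C] [Fintype D]
    (f : A → B → C → D → ℝ) :
    ∑ a, ∑ b, ∑ c, ∑ d, f a b c d = ∑ d, ∑ c, ∑ b, ∑ a, f a b c d :=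
  calc ∑ a, ∑ b, ∑ c, ∑ d, f a b c d
      = ∑ a, ∑ b, ∑ d, ∑ c, f a b c d :=
        Finset.sum_congr rfl fun a _ => Finset.sum_congr rfl fun b _ => Finset.sum_comm
    _ = ∑ a, ∑ d, ∑ b, ∑ c, f a b c d :=
        Finset.sum_congr rfl fun a _ => Finset.sum_comm
    _ = ∑ d, ∑ a, ∑ b, ∑ c, f a b c d := Finset.sum_comm
    _ = ∑ d, ∑ a, ∑ c, ∑ b, f a b c d :=
        Finset.sum_congr rfl fun d _ => Finset.sum_congr rfl fun a _ => Finset.sum_comm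
    _ = ∑ d, ∑ c, ∑ a, ∑ b, f a b c d :=
        Finset.sum_congr rfl fun d _ => Finset.sum_comm
    _ = ∑ d, ∑ c, ∑ b, ∑ a, f a b c d :=
        Finset.sum_congr rfl fun d _ => Finset.sum_congr rfl fun c _ => Finset.sum_comm

private lemma delta2_eq (P : JointDist X Y) (β : ℝ) (q : Z → ℝ) (h : X → Z → ℝ) :
    delta2IBtrivial P β q h
      = (1 / 2) * ∑ z, (1 / q z) * Gfunc P β (fun x => h x z) := by
  have T1 : (∑ x, ∑ z, P.pX x / q z * (h x z) ^ 2)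
      = ∑ z, (1 / q z) * ∑ x, (h x z) ^ 2 * P.pX x := by
    rw [Finset.sum_comm]
    refine Finset.sum_congr rfl fun z _ => ?_
    rw [Finset.mul_sum]
    exact Finset.sum_congr rfl fun x _ => by ring
  have T2 : (∑ x, ∑ x', ∑ y, ∑ z,
        P.p x y * P.p x' y / (P.pY y * q z) * (h x z * h x' z))
      = ∑ z, (1 / q z) * ∑ y, (1 / P.pY y) * (∑ x, h x z * P.p x y) ^ 2 := by
    rw [sum_comm4_aux]
    refine Finset.sum_congr rfl fun z _ => ?_
    simp only [sq, Finset.sum_mul_sum, Finset.mul_sum]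
    refine Finset.sum_congr rfl fun y _ => ?_
    rw [Finset.sum_comm]
    refine Finset.sum_congr rfl fun x' _ => ?_
    rw [Finset.sum_mul, Finset.mul_sum, Finset.mul_sum]
    exact Finset.sum_congr rfl fun x _ => by ring
  have T3 : (∑ x, ∑ x', ∑ z, P.pX x * P.pX x' / q z * (h x z * h x' z))
      = ∑ z, (1 / q z) * (∑ x, h x z * P.pX x) ^ 2 := by
    rw [sum_comm3_aux]
    refine Finset.sum_congr rfl fun z _ => ?_
    simp only [sq, Finset.sum_mul_sum, Finset.mul_sum]
    rw [Finset.sum_comm]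
    refine Finset.sum_congr rfl fun x' _ => ?_
    rw [Finset.sum_mul, Finset.mul_sum]
    exact Finset.sum_congr rfl fun x _ => by ring
  unfold delta2IBtrivial
  rw [T1, T2, T3]
  simp only [Gfunc]
  rw [Finset.mul_sum, Finset.mul_sum, ← Finset.sum_sub_distrib, ← Finset.sum_add_distrib]
  exact congrArg _ (Finset.sum_congr rfl fun z _ => by ring)

private lemma Gfunc_mul (P : JointDist X Y) (β : ℝ) (h : X → ℝ) (c : ℝ) :
    Gfunc P β (fun x => h x * c) = c ^ 2 * Gfunc P β h := by
  have e2 : ∀ y, (∑ x, (h x * c) * P.p x y) = c * ∑ x, h x * P.p x y := fun y => by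
    rw [Finset.mul_sum]; exact Finset.sum_congr rfl fun x _ => by ring
  have e1 : (∑ x, (h x * c) ^ 2 * P.pX x) = c ^ 2 * ∑ x, (h x) ^ 2 * P.pX x := by
    rw [Finset.mul_sum]; exact Finset.sum_congr rfl fun x _ => by ring
  have e3 : (∑ x, (h x * c) * P.pX x) = c * ∑ x, h x * P.pX x := by
    rw [Finset.mul_sum]; exact Finset.sum_congr rfl fun x _ => by ring
  have e2' : (∑ y, (1 / P.pY y) * (c * ∑ x, h x * P.p x y) ^ 2)
      = c ^ 2 * ∑ y, (1 / P.pY y) * (∑ x, h x * P.p x y) ^ 2 := by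
    rw [Finset.mul_sum]; exact Finset.sum_congr rfl fun y _ => by ring
  simp only [Gfunc, e2]
  rw [e1, e3, e2']
  ring

/-- (Reduction of the second-variation condition to a condition on `h(x)`.)
At the trivial representation `p(z|x) = q(z)` (on a representation alphabet with at least two
elements), there exists a perturbation `h(z|x)` with `∑ z, h(z|x) = 0` such that
`δ²IB_β[p(z|x)] < 0` if and only if there exists a function `h(x)` with `G[h(x)] < 0`.
Moreover, given such an `h(x)`, the product perturbation `h(z|x) = h(x)·h₂(z)` — for any `h₂`
with `∑ z, h₂(z) = 0` and `∑ z, h₂(z)²/q(z) > 0` — achieves `δ²IB_β < 0` at the trivial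
representation. -/
theorem neg_second_variation_iff_Gfunc (P : JointDist X Y) (β : ℝ)
    (hZ : 2 ≤ Fintype.card Z)
    (q : Z → ℝ) (hq : ∀ z, 0 < q z) (hq1 : ∑ z, q z = 1) :
    ((∃ h : X → Z → ℝ, (∀ x, ∑ z, h x z = 0) ∧ delta2IBtrivial P β q h < 0) ↔
      ∃ h : X → ℝ, Gfunc P β h < 0) ∧
    ∀ h : X → ℝ, Gfunc P β h < 0 →
      ∀ h₂ : Z → ℝ, (∑ z, h₂ z = 0) → (0 < ∑ z, (h₂ z) ^ 2 / q z) →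
        delta2IBtrivial P β q (fun x z => h x * h₂ z) < 0 := by
  classical
  have main2 : ∀ h : X → ℝ, Gfunc P β h < 0 →
      ∀ h₂ : Z → ℝ, (∑ z, h₂ z = 0) → (0 < ∑ z, (h₂ z) ^ 2 / q z) →
        delta2IBtrivial P β q (fun x z => h x * h₂ z) < 0 := by
    intro h hG h₂ _ hpos
    rw [delta2_eq]
    have key : (∑ z, (1 / q z) * Gfunc P β (fun x => h x * h₂ z))
        = (∑ z, (h₂ z) ^ 2 / q z) * Gfunc P β h := by
      rw [Finset.sum_mul]
      exact Finset.sum_congr rfl fun z _ => by rw [Gfunc_mul]; ring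
    rw [key]
    have := mul_neg_of_pos_of_neg hpos hG
    linarith
  refine ⟨⟨?_, ?_⟩, main2⟩
  · rintro ⟨h, _, hneg⟩
    rw [delta2_eq] at hneg
    have hS : (∑ z, (1 / q z) * Gfunc P β (fun x => h x z)) < 0 := by linarith
    have hex : ∃ z ∈ Finset.univ, (1 / q z) * Gfunc P β (fun x => h x z) < 0 := by
      by_contra hc
      push_neg at hc
      exact absurd (Finset.sum_nonneg hc) (not_le.2 hS)
    obtain ⟨z, _, hz⟩ := hex
    refine ⟨fun x => h x z, ?_⟩
    by_contra hG0
    push_neg at hG0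
    have hqz : 0 ≤ 1 / q z := div_nonneg zero_le_one (hq z).le
    exact absurd (mul_nonneg hqz hG0) (not_le.2 hz)
  · rintro ⟨h, hG⟩
    obtain ⟨z₀, z₁, hne⟩ := Fintype.exists_pair_of_one_lt_card (by omega : 1 < Fintype.card Z)
    set h₂ : Z → ℝ := fun z => (if z = z₀ then (1:ℝ) else 0) - (if z = z₁ then 1 else 0)
      with hh₂
    have hsum2 : ∑ z, h₂ z = 0 := by
      simp [hh₂, Finset.sum_sub_distrib, Finset.sum_ite_eq', Finset.mem_univ]
    have hpos : 0 < ∑ z, (h₂ z) ^ 2 / q z := by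
      refine Finset.sum_pos' (fun z _ => div_nonneg (sq_nonneg _) (hq z).le)
        ⟨z₀, Finset.mem_univ _, ?_⟩
      have h1 : h₂ z₀ = 1 := by simp [hh₂, hne]
      rw [h1]
      have := hq z₀
      positivity
    exact ⟨fun x z => h x * h₂ z,
      fun x => by rw [← Finset.mul_sum, hsum2, mul_zero],
      main2 h hG h₂ hsum2 hpos⟩
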